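/- Wasserstein coverage guarantee: Let (S,d) be a finite metric space, P and P̂ two transition kernels on the same finite MDP (reward r with 0 ≤ r ≤ R_max, discount γ ∈ (0,1), initial distribution ρ₀), Π a nonempty set of stationary policies, and d_data a probability mass function on S × A satisfying κ-coverage for Π under P. Suppose for every π ∈ Π the value function V_π^{P̂} is L_v-Lipschitz with respect to d. Then for every π ∈ Π, |V_π(P) − V_π(P̂)| ≤ γ·L_v·κ · Σ_{(s,a)} d_data(s,a)·W₁(P(·|s,a), P̂(·|s,a)). -/

import Mathlib

open Finset Real

/-- `p` is a probability mass function on a finite type. -/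
def IsPMF {X : Type*} [Fintype X] (p : X → ℝ) : Prop :=
  (∀ x, 0 ≤ p x) ∧ ∑ x, p x = 1

/-- `P` is a transition kernel: each `P s a` is a pmf on states. -/
def IsKernel {S A : Type*} [Fintype S] [Fintype A] (P : S → A → S → ℝ) : Prop :=
  ∀ s a, IsPMF (P s a)

/-- `pol` is a stationary policy: each `pol s` is a pmf on actions. -/
def IsPolicy {S A : Type*} [Fintype S] [Fintype A] (pol : S → A → ℝ) : Prop :=
  ∀ s, IsPMF (pol s)

/-- `V` satisfies the Bellman evaluation equation for policy `pol` under kernel `P`,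
reward `r` and discount `γ`. -/
def IsValue {S A : Type*} [Fintype S] [Fintype A] (P : S → A → S → ℝ) (pol : S → A → ℝ)
    (r : S → A → ℝ) (γ : ℝ) (V : S → ℝ) : Prop :=
  ∀ s, V s = ∑ a, pol s a * (r s a + γ * ∑ s', P s a s' * V s')

/-- `d` is the (unnormalized) discounted state-action occupancy of `pol` under kernel `P`
with initial distribution `ρ₀` and discount `γ`. -/
def IsOcc {S A : Type*} [Fintype S] [Fintype A] (P : S → A → S → ℝ) (pol : S → A → ℝ)
    (ρ₀ : S → ℝ) (γ : ℝ) (d : S → A → ℝ) : Prop :=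
  ∀ s a, d s a = pol s a * (ρ₀ s + γ * ∑ x : S × A, d x.1 x.2 * P x.1 x.2 s)

/-- ℓ₁ distance between two pmfs on a finite type. -/
noncomputable def l1Dist {X : Type*} [Fintype X] (p q : X → ℝ) : ℝ :=
  ∑ x, |p x - q x|

/-- Total variation distance between two pmfs on a finite type. -/
noncomputable def tvDist {X : Type*} [Fintype X] (p q : X → ℝ) : ℝ :=
  (1 / 2) * ∑ x, |p x - q x|

/-- Kullback-Leibler divergence between two pmfs on a finite type (finite under
absolute continuity). -/
noncomputable def klF {X : Type*} [Fintype X] (p q : X → ℝ) : ℝ :=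
  ∑ x, p x * Real.log (p x / q x)

/-- `d_data` satisfies κ-coverage for the policy set `Pol` under kernel `P`:
every occupancy of a policy in `Pol` is dominated by `κ · d_data`. -/
def KappaCoverage {S A : Type*} [Fintype S] [Fintype A] (P : S → A → S → ℝ) (ρ₀ : S → ℝ)
    (γ : ℝ) (Pol : Set (S → A → ℝ)) (ddata : S → A → ℝ) (κ : ℝ) : Prop :=
  ∀ pol ∈ Pol, ∀ dpol : S → A → ℝ, IsOcc P pol ρ₀ γ dpol → ∀ s a, dpol s a ≤ κ * ddata s a

/-- Critic discrepancy `Δ_{D,P̂}(s,a)`. -/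
noncomputable def critDelta {S A : Type*} [Fintype S] (P Phat : S → A → S → ℝ)
    (D : S → A → S → ℝ) (s : S) (a : A) : ℝ :=
  (∑ s', P s a s' * D s a s') - ∑ s', Phat s a s' * D s a s'

/-- Supremum over the critic class of the critic discrepancy at `(s,a)`. -/
noncomputable def critSup {S A : Type*} [Fintype S] (𝒟 : Set (S → A → S → ℝ))
    (P Phat : S → A → S → ℝ) (s : S) (a : A) : ℝ :=
  sSup {y | ∃ D ∈ 𝒟, y = critDelta P Phat D s a}

/-- 1-Wasserstein distance between two pmfs on a finite metric space
(Kantorovich–Rubinstein dual form). -/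
noncomputable def w1 {X : Type*} [Fintype X] [MetricSpace X] (p q : X → ℝ) : ℝ :=
  sSup {y | ∃ f : X → ℝ, (∀ a b, |f a - f b| ≤ dist a b) ∧ y = ∑ x, (p x - q x) * f x}

lemma my_le_w1 {X : Type*} [Fintype X] [Nonempty X] [MetricSpace X]
    (p q : X → ℝ) (hpq : ∑ x, p x = ∑ x, q x)
    (f : X → ℝ) (hf : ∀ a b, |f a - f b| ≤ dist a b) :
    ∑ x, (p x - q x) * f x ≤ w1 p q := by
  apply le_csSup
  · obtain ⟨x₀⟩ := (inferInstance : Nonempty X)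
    refine ⟨∑ x, |p x - q x| * dist x x₀, ?_⟩
    rintro y ⟨g, hg, rfl⟩
    have h0 : ∑ x, (p x - q x) * g x
        = (∑ x, (p x - q x) * (g x - g x₀)) + (∑ x, (p x - q x)) * g x₀ := by
      rw [Finset.sum_mul, ← Finset.sum_add_distrib]
      exact Finset.sum_congr rfl fun x _ => by ring
    have h1 : ∑ x, (p x - q x) = 0 := by
      rw [Finset.sum_sub_distrib, hpq, sub_self]
    rw [h0, h1, zero_mul, add_zero]
    apply Finset.sum_le_sum
    intro x _
    calc (p x - q x) * (g x - g x₀) ≤ |(p x - q x) * (g x - g x₀)| := le_abs_self _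
      _ = |p x - q x| * |g x - g x₀| := abs_mul _ _
      _ ≤ |p x - q x| * dist x x₀ := mul_le_mul_of_nonneg_left (hg x x₀) (abs_nonneg _)
  · exact ⟨f, hf, rfl⟩

lemma my_abs_le_w1 {X : Type*} [Fintype X] [Nonempty X] [MetricSpace X]
    (p q : X → ℝ) (hp : ∑ x, p x = 1) (hq : ∑ x, q x = 1)
    (f : X → ℝ) (Lv : ℝ) (hf : ∀ a b, |f a - f b| ≤ Lv * dist a b) :
    |∑ x, (p x - q x) * f x| ≤ Lv * w1 p q := by
  have hpq : ∑ x, p x = ∑ x, q x := by rw [hp, hq]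
  by_cases hX : ∃ a b : X, a ≠ b
  · obtain ⟨a, b, hab⟩ := hX
    have hdpos : 0 < dist a b := dist_pos.mpr hab
    have hLv : 0 ≤ Lv := by
      have h1 := hf a b
      have h2 := abs_nonneg (f a - f b)
      nlinarith
    rcases eq_or_lt_of_le hLv with hLv0 | hLvpos
    · -- Lv = 0, f constant
      have hconst : ∀ x y : X, f x = f y := by
        intro x y
        have h1 := hf x y
        rw [← hLv0, zero_mul] at h1
        have := abs_nonpos_iff.mp h1
        linarith [sub_eq_zero.mp this]
      have hz : ∑ x, (p x - q x) * f x = 0 := by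
        have : ∑ x, (p x - q x) * f x = (∑ x, (p x - q x)) * f a := by
          rw [Finset.sum_mul]
          exact Finset.sum_congr rfl fun x _ => by rw [hconst x a]
        rw [this, Finset.sum_sub_distrib, hpq, sub_self, zero_mul]
      rw [hz, abs_zero, ← hLv0, zero_mul]
    · have hne : Lv ≠ 0 := ne_of_gt hLvpos
      have hup : ∀ g : X → ℝ, (∀ a b, |g a - g b| ≤ dist a b) →
          ∑ x, (p x - q x) * g x ≤ w1 p q := fun g hg => my_le_w1 p q hpq g hg
      have hg1 : ∀ a b : X, |f a / Lv - f b / Lv| ≤ dist a b := by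
        intro a b
        rw [div_sub_div_same, abs_div, abs_of_pos hLvpos, div_le_iff₀ hLvpos]
        calc |f a - f b| ≤ Lv * dist a b := hf a b
          _ = dist a b * Lv := by ring
      have hg2 : ∀ a b : X, |(-(f a)) / Lv - (-(f b)) / Lv| ≤ dist a b := by
        intro a b
        rw [div_sub_div_same, abs_div, abs_of_pos hLvpos, div_le_iff₀ hLvpos]
        rw [neg_sub_neg]
        calc |f b - f a| ≤ Lv * dist b a := hf b a
          _ = dist a b * Lv := by rw [dist_comm]; ring
      have e1 : ∑ x, (p x - q x) * f x = Lv * ∑ x, (p x - q x) * (f x / Lv) := by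
        rw [Finset.mul_sum]
        exact Finset.sum_congr rfl fun x _ => by field_simp
      have e2 : -(∑ x, (p x - q x) * f x) = Lv * ∑ x, (p x - q x) * ((-(f x)) / Lv) := by
        rw [Finset.mul_sum, ← Finset.sum_neg_distrib]
        exact Finset.sum_congr rfl fun x _ => by field_simp
      rw [abs_le]
      constructor
      · have := mul_le_mul_of_nonneg_left (hup _ hg2) hLv
        rw [← e2] at this
        linarith
      · have := mul_le_mul_of_nonneg_left (hup _ hg1) hLv
        rw [← e1] at this
        linarith
  · push_neg at hX
    have hz : ∀ x : X, p x - q x = 0 := by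
      intro x
      have hpu : ∑ z, p z = p x := by
        apply Finset.sum_eq_single_of_mem x (Finset.mem_univ x)
        intro b _ hbx; exact absurd (hX b x) hbx
      have hqu : ∑ z, q z = q x := by
        apply Finset.sum_eq_single_of_mem x (Finset.mem_univ x)
        intro b _ hbx; exact absurd (hX b x) hbx
      have : p x = q x := by rw [← hpu, ← hqu, hpq]
      linarith
    have hz2 : ∑ x, (p x - q x) * f x = 0 := by
      apply Finset.sum_eq_zero; intro x _; rw [hz x, zero_mul]
    have hset : {y | ∃ f : X → ℝ, (∀ a b, |f a - f b| ≤ dist a b) ∧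
        y = ∑ x, (p x - q x) * f x} = {0} := by
      ext y
      simp only [Set.mem_setOf_eq, Set.mem_singleton_iff]
      constructor
      · rintro ⟨g, hg, rfl⟩
        apply Finset.sum_eq_zero; intro x _; rw [hz x, zero_mul]
      · rintro rfl
        exact ⟨fun _ => 0, fun a b => by simpa using dist_nonneg, by simp⟩
    rw [hz2, abs_zero]
    unfold w1
    rw [hset, csSup_singleton, mul_zero]

lemma my_exists_occ {S A : Type*} [Fintype S] [Fintype A]
    (P : S → A → S → ℝ) (hP : IsKernel P) (pol : S → A → ℝ) (hpol : IsPolicy pol)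
    (ρ₀ : S → ℝ) (hρ : IsPMF ρ₀) (γ : ℝ) (hγ0 : 0 < γ) (hγ1 : γ < 1) :
    ∃ d : S → A → ℝ, IsOcc P pol ρ₀ γ d ∧ ∀ s a, 0 ≤ d s a := by
  classical
  set M : S → S → ℝ := fun s s' => ∑ a, pol s a * P s a s' with hM
  have hM0 : ∀ s s', 0 ≤ M s s' := fun s s' =>
    Finset.sum_nonneg fun a _ => mul_nonneg ((hpol s).1 a) ((hP s a).1 s')
  have hM1 : ∀ s, ∑ s', M s s' = 1 := by
    intro s
    rw [hM]
    simp only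
    rw [Finset.sum_comm]
    have : ∀ a : A, ∑ s', pol s a * P s a s' = pol s a := by
      intro a
      rw [← Finset.mul_sum, (hP s a).2, mul_one]
    rw [Finset.sum_congr rfl fun a _ => this a]
    exact (hpol s).2
  let μ : ℕ → S → ℝ := fun n => Nat.rec ρ₀ (fun _ ν => fun s => ∑ s'', ν s'' * M s'' s) n
  have hμ0 : μ 0 = ρ₀ := rfl
  have hμs : ∀ n s, μ (n + 1) s = ∑ s'', μ n s'' * M s'' s := fun n s => rfl
  have hμnn : ∀ n s, 0 ≤ μ n s := by
    intro n
    induction n with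
    | zero => exact hρ.1
    | succ n ih =>
        intro s
        rw [hμs]
        exact Finset.sum_nonneg fun s'' _ => mul_nonneg (ih s'') (hM0 s'' s)
  have hμ1 : ∀ n, ∑ s, μ n s = 1 := by
    intro n
    induction n with
    | zero => exact hρ.2
    | succ n ih =>
        rw [Finset.sum_congr rfl fun s _ => hμs n s, Finset.sum_comm]
        calc ∑ s'', ∑ s, μ n s'' * M s'' s = ∑ s'', μ n s'' := by
              refine Finset.sum_congr rfl fun s'' _ => ?_
              rw [← Finset.mul_sum, hM1 s'', mul_one]
          _ = 1 := ih
  have hμle : ∀ n s, μ n s ≤ 1 := by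
    intro n s
    calc μ n s ≤ ∑ s', μ n s' :=
          Finset.single_le_sum (fun s' _ => hμnn n s') (Finset.mem_univ s)
      _ = 1 := hμ1 n
  have hsum : ∀ s, Summable (fun n => γ ^ n * μ n s) := by
    intro s
    apply Summable.of_nonneg_of_le
        (fun n => mul_nonneg (pow_nonneg hγ0.le n) (hμnn n s))
        (fun n => ?_) (summable_geometric_of_lt_one hγ0.le hγ1)
    calc γ ^ n * μ n s ≤ γ ^ n * 1 :=
          mul_le_mul_of_nonneg_left (hμle n s) (pow_nonneg hγ0.le n)
      _ = γ ^ n := mul_one _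
  set ν : S → ℝ := fun s => ∑' n, γ ^ n * μ n s with hν
  have hνnn : ∀ s, 0 ≤ ν s := fun s =>
    tsum_nonneg fun n => mul_nonneg (pow_nonneg hγ0.le n) (hμnn n s)
  have hνrec : ∀ s, ν s = ρ₀ s + γ * ∑ s'', ν s'' * M s'' s := by
    intro s
    have h0 : ν s = γ ^ 0 * μ 0 s + ∑' n, γ ^ (n + 1) * μ (n + 1) s :=
      Summable.tsum_eq_zero_add (hsum s)
    have h1 : ∀ n, γ ^ (n + 1) * μ (n + 1) s
        = ∑ s'', γ * ((γ ^ n * μ n s'') * M s'' s) := by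
      intro n
      rw [hμs, Finset.mul_sum]
      exact Finset.sum_congr rfl fun s'' _ => by rw [pow_succ]; ring
    have h2 : ∑' n, γ ^ (n + 1) * μ (n + 1) s
        = ∑ s'', ∑' n, γ * ((γ ^ n * μ n s'') * M s'' s) := by
      rw [tsum_congr h1]
      exact Summable.tsum_finsetSum fun s'' _ => ((hsum s'').mul_right (M s'' s)).mul_left γ
    have h3 : ∀ s'' : S, ∑' n, γ * ((γ ^ n * μ n s'') * M s'' s)
        = γ * (ν s'' * M s'' s) := by
      intro s''
      rw [tsum_mul_left, tsum_mul_right]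
    rw [h0, h2, Finset.sum_congr rfl fun s'' _ => h3 s'', ← Finset.mul_sum]
    simp [hμ0]
  refine ⟨fun s a => pol s a * ν s, ?_, fun s a => mul_nonneg ((hpol s).1 a) (hνnn s)⟩
  intro s a
  have hx : ∑ x : S × A, (pol x.1 x.2 * ν x.1) * P x.1 x.2 s = ∑ s'', ν s'' * M s'' s := by
    rw [Fintype.sum_prod_type]
    refine Finset.sum_congr rfl fun s'' _ => ?_
    rw [hM]
    simp only
    rw [Finset.mul_sum]
    exact Finset.sum_congr rfl fun a' _ => by ring
  rw [hx, ← hνrec s]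

lemma my_occ_identity {S A : Type*} [Fintype S] [Fintype A]
    (P : S → A → S → ℝ) (pol : S → A → ℝ) (ρ₀ : S → ℝ) (γ : ℝ)
    (d : S → A → ℝ) (hd : IsOcc P pol ρ₀ γ d)
    (g : S → ℝ) (h : S → A → ℝ)
    (hg : ∀ s, g s = ∑ a, pol s a * (h s a + γ * ∑ s', P s a s' * g s')) :
    ∑ s, ρ₀ s * g s = ∑ x : S × A, d x.1 x.2 * h x.1 x.2 := by
  classical
  set c : S → ℝ := fun s => ρ₀ s + γ * ∑ x : S × A, d x.1 x.2 * P x.1 x.2 s with hc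
  have hdc : ∀ s a, d s a = pol s a * c s := fun s a => hd s a
  have key : ∑ s, c s * g s
      = (∑ x : S × A, d x.1 x.2 * h x.1 x.2) + ∑ s', (c s' - ρ₀ s') * g s' := by
    calc ∑ s, c s * g s
        = ∑ s, ∑ a, (d s a * h s a + d s a * (γ * ∑ s', P s a s' * g s')) := by
          refine Finset.sum_congr rfl fun s _ => ?_
          rw [hg s, Finset.mul_sum]
          refine Finset.sum_congr rfl fun a _ => ?_
          rw [hdc s a]; ring
      _ = (∑ s, ∑ a, d s a * h s a)
          + ∑ s, ∑ a, d s a * (γ * ∑ s', P s a s' * g s') := by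
          rw [← Finset.sum_add_distrib]
          exact Finset.sum_congr rfl fun s _ => by rw [Finset.sum_add_distrib]
      _ = (∑ x : S × A, d x.1 x.2 * h x.1 x.2) + ∑ s', (c s' - ρ₀ s') * g s' := by
          congr 1
          · rw [Fintype.sum_prod_type]
          · calc ∑ s, ∑ a, d s a * (γ * ∑ s', P s a s' * g s')
                = ∑ x : S × A, d x.1 x.2 * (γ * ∑ s', P x.1 x.2 s' * g s') := by
                  rw [Fintype.sum_prod_type]
              _ = ∑ x : S × A, ∑ s', γ * (d x.1 x.2 * P x.1 x.2 s' * g s') := by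
                  refine Finset.sum_congr rfl fun x _ => ?_
                  rw [Finset.mul_sum, Finset.mul_sum]
                  exact Finset.sum_congr rfl fun s' _ => by ring
              _ = ∑ s', ∑ x : S × A, γ * (d x.1 x.2 * P x.1 x.2 s' * g s') :=
                  Finset.sum_comm
              _ = ∑ s', (c s' - ρ₀ s') * g s' := by
                  refine Finset.sum_congr rfl fun s' _ => ?_
                  have hcs : c s' - ρ₀ s'
                      = γ * ∑ x : S × A, d x.1 x.2 * P x.1 x.2 s' := by
                    rw [hc]; ring
                  rw [hcs, Finset.mul_sum, Finset.sum_mul]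
                  refine Finset.sum_congr rfl fun x _ => ?_
                  ring
  have lin : ∑ s, ρ₀ s * g s = (∑ s, c s * g s) - ∑ s', (c s' - ρ₀ s') * g s' := by
    rw [← Finset.sum_sub_distrib]
    exact Finset.sum_congr rfl fun s _ => by ring
  rw [lin, key]; ring

/-- **Wasserstein coverage guarantee.** If the simulator value functions of all policies
in `Pol` are `Lv`-Lipschitz and `ddata` κ-covers their occupancies, then each value gap
is bounded by the `ddata`-weighted one-step `W₁` error. -/
theorem wasserstein_coverage_guarantee
    {S A : Type*} [Fintype S] [Fintype A] [Nonempty S] [Nonempty A] [MetricSpace S]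
    (P Phat : S → A → S → ℝ) (hP : IsKernel P) (hPhat : IsKernel Phat)
    (r : S → A → ℝ) (Rmax : ℝ) (hr : ∀ s a, 0 ≤ r s a ∧ r s a ≤ Rmax)
    (γ : ℝ) (hγ0 : 0 < γ) (hγ1 : γ < 1)
    (ρ₀ : S → ℝ) (hρ : IsPMF ρ₀)
    (Pol : Set (S → A → ℝ)) (hPolNe : Pol.Nonempty) (hPol : ∀ p ∈ Pol, IsPolicy p)
    (ddata : S → A → ℝ) (hdata : IsPMF (fun x : S × A => ddata x.1 x.2))
    (κ : ℝ) (hκ : 0 < κ)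
    (hcov : KappaCoverage P ρ₀ γ Pol ddata κ)
    (Lv : ℝ)
    (hLip : ∀ p ∈ Pol, ∀ Vhat : S → ℝ, IsValue Phat p r γ Vhat →
      ∀ x y, |Vhat x - Vhat y| ≤ Lv * dist x y) :
    ∀ p ∈ Pol, ∀ V Vhat : S → ℝ, IsValue P p r γ V → IsValue Phat p r γ Vhat →
      |(∑ s, ρ₀ s * V s) - ∑ s, ρ₀ s * Vhat s| ≤
        γ * Lv * κ * ∑ x : S × A, ddata x.1 x.2 * w1 (P x.1 x.2) (Phat x.1 x.2) := by

  classical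
  intro pol hpolmem V Vhat hV hVhat
  have hpol := hPol pol hpolmem
  obtain ⟨d, hocc, hdnn⟩ := my_exists_occ P hP pol hpol ρ₀ hρ γ hγ0 hγ1
  have hdle := hcov pol hpolmem d hocc
  have hgBell : ∀ s, V s - Vhat s = ∑ a, pol s a *
      ((γ * ∑ s', (P s a s' - Phat s a s') * Vhat s')
        + γ * ∑ s', P s a s' * (V s' - Vhat s')) := by
    intro s
    rw [hV s, hVhat s, ← Finset.sum_sub_distrib]
    refine Finset.sum_congr rfl fun a _ => ?_
    have e1 : ∑ s', (P s a s' - Phat s a s') * Vhat s'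
        = (∑ s', P s a s' * Vhat s') - ∑ s', Phat s a s' * Vhat s' := by
      rw [← Finset.sum_sub_distrib]
      exact Finset.sum_congr rfl fun s' _ => by ring
    have e2 : ∑ s', P s a s' * (V s' - Vhat s')
        = (∑ s', P s a s' * V s') - ∑ s', P s a s' * Vhat s' := by
      rw [← Finset.sum_sub_distrib]
      exact Finset.sum_congr rfl fun s' _ => by ring
    rw [e1, e2]; ring
  have hkey : ∑ s, ρ₀ s * (V s - Vhat s)
      = ∑ x : S × A, d x.1 x.2 * (γ * ∑ s', (P x.1 x.2 s' - Phat x.1 x.2 s') * Vhat s') :=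
    my_occ_identity P pol ρ₀ γ d hocc (fun s => V s - Vhat s)
      (fun s a => γ * ∑ s', (P s a s' - Phat s a s') * Vhat s') hgBell
  have hLHS : (∑ s, ρ₀ s * V s) - ∑ s, ρ₀ s * Vhat s = ∑ s, ρ₀ s * (V s - Vhat s) := by
    rw [← Finset.sum_sub_distrib]
    exact Finset.sum_congr rfl fun s _ => by ring
  rw [hLHS, hkey]
  calc |∑ x : S × A, d x.1 x.2 * (γ * ∑ s', (P x.1 x.2 s' - Phat x.1 x.2 s') * Vhat s')|
      ≤ ∑ x : S × A, |d x.1 x.2 * (γ * ∑ s', (P x.1 x.2 s' - Phat x.1 x.2 s') * Vhat s')| :=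
        Finset.abs_sum_le_sum_abs _ _
    _ ≤ ∑ x : S × A, γ * Lv * κ * (ddata x.1 x.2 * w1 (P x.1 x.2) (Phat x.1 x.2)) := by
        refine Finset.sum_le_sum fun x _ => ?_
        have habs : |∑ s', (P x.1 x.2 s' - Phat x.1 x.2 s') * Vhat s'|
            ≤ Lv * w1 (P x.1 x.2) (Phat x.1 x.2) :=
          my_abs_le_w1 (P x.1 x.2) (Phat x.1 x.2) (hP x.1 x.2).2 (hPhat x.1 x.2).2
            Vhat Lv (hLip pol hpolmem Vhat hVhat)
        have h1 : |d x.1 x.2 * (γ * ∑ s', (P x.1 x.2 s' - Phat x.1 x.2 s') * Vhat s')|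
            = d x.1 x.2 * (γ * |∑ s', (P x.1 x.2 s' - Phat x.1 x.2 s') * Vhat s'|) := by
          rw [abs_mul, abs_mul, abs_of_nonneg (hdnn x.1 x.2), abs_of_nonneg hγ0.le]
        rw [h1]
        have hd := hdle x.1 x.2
        have hT0 := abs_nonneg (∑ s', (P x.1 x.2 s' - Phat x.1 x.2 s') * Vhat s')
        have hdd : 0 ≤ ddata x.1 x.2 := hdata.1 x
        nlinarith [mul_le_mul_of_nonneg_right hd (mul_nonneg hγ0.le hT0),
          mul_le_mul_of_nonneg_left habs (mul_nonneg (mul_nonneg hκ.le hdd) hγ0.le)]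
    _ = γ * Lv * κ * ∑ x : S × A, ddata x.1 x.2 * w1 (P x.1 x.2) (Phat x.1 x.2) :=
        (Finset.mul_sum _ _ _).symm
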